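/- Fix a real parameter η ≥ 1. Let W, X, Y, Z be mutually independent random variables, where W, Y, Z are exponentially distributed with rate 1 and X has the Gamma distribution with shape 2 and rate 1. Then for all real numbers α₁, α₂, α_sr with 0 ≤ α₁ < 1, 0 ≤ α₂ < 1 and 0 ≤ α_sr < η, lim_{ρ → ∞} log P(W ≤ ρ^{α_sr−η} and X ≤ ρ^{α₁−1} and Y + Z/(1 + ρX) ≤ ρ^{α₂−1}) / log ρ = −s(α₁, α₂, α_sr), where s(α₁, α₂, α_sr) = η + 4 − 3α₁ − 2α₂ − α_sr if α₁ + α₂ ≤ 1 and s(α₁, α₂, α_sr) = η + 3 − 2α₁ − α₂ − α_sr if α₁ + α₂ > 1. -/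

import Mathlib

open MeasureTheory Filter ProbabilityTheory

open Real Set


section Aux

lemma expIic {t : ℝ} (ht : 0 ≤ t) : ((expMeasure 1) (Iic t)).toReal = 1 - Real.exp (-t) := by
  haveI : IsProbabilityMeasure (expMeasure (1:ℝ)) := isProbabilityMeasure_expMeasure one_pos
  have h := cdf_eq_real (μ := expMeasure 1) t
  have h2 := cdf_expMeasure_eq one_pos t
  rw [h, if_pos ht, one_mul] at h2
  exact h2

lemma expIio0 : (expMeasure 1) (Iio 0) = 0 := by
  rw [expMeasure, gammaMeasure, withDensity_apply _ measurableSet_Iio]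
  exact lintegral_gammaPDF_of_nonpos le_rfl

lemma gammaIio0 : (gammaMeasure 2 1) (Iio 0) = 0 := by
  rw [gammaMeasure, withDensity_apply _ measurableSet_Iio]
  exact lintegral_gammaPDF_of_nonpos le_rfl

lemma expIic0 : (expMeasure 1) (Iic 0) = 0 := by
  have : (Iic (0:ℝ)) = Iio 0 ∪ {0} := by ext x; simp [le_iff_lt_or_eq]
  rw [this]
  refine measure_union_null expIio0 ?_
  exact (withDensity_absolutelyContinuous _ _) (by simp)

lemma gammaIic0 : (gammaMeasure 2 1) (Iic 0) = 0 := by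
  have : (Iic (0:ℝ)) = Iio 0 ∪ {0} := by ext x; simp [le_iff_lt_or_eq]
  rw [this]
  refine measure_union_null gammaIio0 ?_
  exact (withDensity_absolutelyContinuous _ _) (by simp)

lemma gammaIoc {s t : ℝ} (hs : 0 ≤ s) (hst : s ≤ t) :
    ((gammaMeasure 2 1) (Ioc s t)) = ENNReal.ofReal (∫ x in s..t, x * Real.exp (-x)) := by
  rw [gammaMeasure, withDensity_apply _ measurableSet_Ioc]
  have hpdf : ∀ x ∈ Ioc s t, gammaPDF 2 1 x = ENNReal.ofReal (x * Real.exp (-x)) := by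
    intro x hx
    have hx0 : (0:ℝ) ≤ x := hs.trans hx.1.le
    rw [gammaPDF_of_nonneg hx0]
    norm_num [Real.Gamma_two, Real.rpow_one]
  rw [setLIntegral_congr_fun measurableSet_Ioc hpdf]
  have hint : IntegrableOn (fun x => x * Real.exp (-x)) (Ioc s t) := by
    apply Continuous.integrableOn_Ioc; continuity
  rw [← ofReal_integral_eq_lintegral_ofReal hint
    (ae_restrict_of_forall_mem measurableSet_Ioc fun x hx => by
      have hx0 : (0:ℝ) ≤ x := hs.trans hx.1.le
      positivity), intervalIntegral.integral_of_le hst]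

lemma gammaIicVal {b : ℝ} (hb : 0 ≤ b) :
    (gammaMeasure 2 1) (Iic b) = ENNReal.ofReal (∫ x in (0:ℝ)..b, x * Real.exp (-x)) := by
  rw [← gammaIoc le_rfl hb]
  refine le_antisymm ?_ (measure_mono Ioc_subset_Iic_self)
  calc (gammaMeasure 2 1) (Iic b) = (gammaMeasure 2 1) (Iic 0 ∪ Ioc 0 b) := by
        rw [Set.Iic_union_Ioc_eq_Iic hb]
    _ ≤ (gammaMeasure 2 1) (Iic 0) + (gammaMeasure 2 1) (Ioc 0 b) := measure_union_le _ _
    _ = (gammaMeasure 2 1) (Ioc 0 b) := by rw [gammaIic0, zero_add]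

lemma expIccVal {v : ℝ} (hv : 0 ≤ v) :
    (expMeasure 1) (Icc 0 v) = (expMeasure 1) (Iic v) := by
  refine le_antisymm (measure_mono Icc_subset_Iic_self) ?_
  calc (expMeasure 1) (Iic v) = (expMeasure 1) (Iic 0 ∪ Icc 0 v) := by
        rw [Set.Iic_union_Icc_eq_Iic hv]
    _ ≤ (expMeasure 1) (Iic 0) + (expMeasure 1) (Icc 0 v) := measure_union_le _ _
    _ = (expMeasure 1) (Icc 0 v) := by rw [expIic0, zero_add]

lemma intUpper {t : ℝ} (ht : 0 ≤ t) : ∫ x in (0:ℝ)..t, x * Real.exp (-x) ≤ t ^ 2 := by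
  have h1 : ∫ x in (0:ℝ)..t, x * Real.exp (-x) ≤ ∫ x in (0:ℝ)..t, x := by
    apply intervalIntegral.integral_mono_on ht
    · apply Continuous.intervalIntegrable; continuity
    · exact continuous_id.intervalIntegrable _ _
    · intro x hx
      nlinarith [Real.exp_le_one_iff.mpr (neg_nonpos.mpr hx.1), hx.1, Real.exp_pos (-x)]
  rw [integral_id] at h1
  nlinarith

lemma intLower {b : ℝ} (hb0 : 0 ≤ b) (hb1 : b ≤ 1) :
    b ^ 2 / 8 ≤ ∫ x in (b/2)..b, x * Real.exp (-x) := by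
  have h1 : ∫ x in (b/2)..b, x * Real.exp (-1) ≤ ∫ x in (b/2)..b, x * Real.exp (-x) := by
    apply intervalIntegral.integral_mono_on (by linarith)
    · apply Continuous.intervalIntegrable; continuity
    · apply Continuous.intervalIntegrable; continuity
    · intro x hx
      have hx0 : 0 ≤ x := le_trans (by linarith [hx.1]) hx.1
      have : Real.exp (-1) ≤ Real.exp (-x) := Real.exp_le_exp.mpr (by linarith [hx.2])
      nlinarith
  have h2 : ∫ x in (b/2)..b, x * Real.exp (-1) = Real.exp (-1) * (3 * b ^ 2 / 8) := by
    rw [intervalIntegral.integral_mul_const, integral_id]; ring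
  have h3 : (1:ℝ)/3 ≤ Real.exp (-1) := by
    rw [Real.exp_neg, inv_eq_one_div, div_le_div_iff₀ (by norm_num) (Real.exp_pos 1)]
    nlinarith [Real.exp_one_lt_d9]
  nlinarith

lemma oneSubExpLe (t : ℝ) : 1 - Real.exp (-t) ≤ t := by
  linarith [Real.add_one_le_exp (-t)]

lemma oneSubExpGeHalf {t : ℝ} (ht0 : 0 ≤ t) (ht1 : t ≤ 1) : t/2 ≤ 1 - Real.exp (-t) := by
  have h1 : 1 + t ≤ Real.exp t := by linarith [Real.add_one_le_exp t]
  have h3 : (0:ℝ) < 1 + t := by linarith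
  have h2 : Real.exp (-t) ≤ 1/(1+t) := by
    rw [Real.exp_neg, inv_eq_one_div, div_le_div_iff₀ (Real.exp_pos t) h3]
    nlinarith
  have h4 : 1/(1+t) ≤ 1 - t/2 := by
    rw [div_le_iff₀ h3]; nlinarith
  linarith

lemma oneSubExpGe1 {t : ℝ} (ht : 1 ≤ t) : 1/2 ≤ 1 - Real.exp (-t) := by
  have h1 : Real.exp (-t) ≤ Real.exp (-1) := Real.exp_le_exp.mpr (by linarith)
  have h2 : Real.exp (-1) ≤ 1/2 := by
    rw [Real.exp_neg, inv_eq_one_div, div_le_div_iff₀ (Real.exp_pos 1) (by norm_num)]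
    nlinarith [Real.add_one_le_exp (1:ℝ)]
  linarith

lemma prod4 {Ω : Type*} [MeasureSpace Ω] [IsProbabilityMeasure (ℙ : Measure Ω)]
    (W X Y Z : Ω → ℝ)
    (hindep : iIndepFun
      ![W, X, Y, Z] ℙ)
    (s0 s1 s2 s3 : Set ℝ) (h0 : MeasurableSet s0) (h1 : MeasurableSet s1)
    (h2 : MeasurableSet s2) (h3 : MeasurableSet s3) :
    ℙ {ω | W ω ∈ s0 ∧ X ω ∈ s1 ∧ Y ω ∈ s2 ∧ Z ω ∈ s3}
      = ℙ (W ⁻¹' s0) * ℙ (X ⁻¹' s1) * ℙ (Y ⁻¹' s2) * ℙ (Z ⁻¹' s3) := by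
  classical
  have key := hindep.measure_inter_preimage_eq_mul (S := Finset.univ)
    (sets := ![s0, s1, s2, s3]) (fun i _ => by fin_cases i <;> assumption)
  have hset : (⋂ i ∈ Finset.univ, ![W, X, Y, Z] i ⁻¹' ![s0, s1, s2, s3] i)
      = {ω | W ω ∈ s0 ∧ X ω ∈ s1 ∧ Y ω ∈ s2 ∧ Z ω ∈ s3} := by
    ext ω
    simp [Fin.forall_fin_succ, Matrix.cons_val_zero, Matrix.cons_val_one, and_assoc]
  rw [hset] at key
  rw [key, Fin.prod_univ_four]
  simp [mul_assoc]

lemma squeezeLog {p : ℝ → ℝ} {s c₁ c₂ : ℝ} (hc₁ : 0 < c₁) (hc₂ : 0 < c₂)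
    (hbound : ∀ᶠ ρ in atTop, c₁ * ρ ^ s ≤ p ρ ∧ p ρ ≤ c₂ * ρ ^ s) :
    Tendsto (fun ρ => Real.log (p ρ) / Real.log ρ) atTop (nhds s) := by
  have hlog : Tendsto Real.log atTop atTop := Real.tendsto_log_atTop
  have hlo : Tendsto (fun ρ : ℝ => s + Real.log c₁ / Real.log ρ) atTop (nhds s) := by
    simpa using tendsto_const_nhds.add (tendsto_const_nhds.div_atTop hlog)
  have hhi : Tendsto (fun ρ : ℝ => s + Real.log c₂ / Real.log ρ) atTop (nhds s) := by
    simpa using tendsto_const_nhds.add (tendsto_const_nhds.div_atTop hlog)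
  refine tendsto_of_tendsto_of_tendsto_of_le_of_le' hlo hhi ?_ ?_
  · filter_upwards [hbound, eventually_ge_atTop (2:ℝ)] with ρ hb hρ
    have hρ0 : (0:ℝ) < ρ := by linarith
    have hlρ : 0 < Real.log ρ := Real.log_pos (by linarith)
    have hrp : (0:ℝ) < ρ ^ s := Real.rpow_pos_of_pos hρ0 s
    have hp : 0 < p ρ := lt_of_lt_of_le (by positivity) hb.1
    have h1 : Real.log c₁ + s * Real.log ρ ≤ Real.log (p ρ) := by
      calc Real.log c₁ + s * Real.log ρ = Real.log (c₁ * ρ ^ s) := by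
            rw [Real.log_mul (ne_of_gt hc₁) (ne_of_gt hrp), Real.log_rpow hρ0]
        _ ≤ Real.log (p ρ) := Real.log_le_log (by positivity) hb.1
    calc s + Real.log c₁ / Real.log ρ
        = (Real.log c₁ + s * Real.log ρ) / Real.log ρ := by field_simp; ring
      _ ≤ Real.log (p ρ) / Real.log ρ := div_le_div_of_nonneg_right h1 hlρ.le
  · filter_upwards [hbound, eventually_ge_atTop (2:ℝ)] with ρ hb hρ
    have hρ0 : (0:ℝ) < ρ := by linarith
    have hlρ : 0 < Real.log ρ := Real.log_pos (by linarith)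
    have hrp : (0:ℝ) < ρ ^ s := Real.rpow_pos_of_pos hρ0 s
    have hp : 0 < p ρ := lt_of_lt_of_le (by positivity) hb.1
    have h1 : Real.log (p ρ) ≤ Real.log c₂ + s * Real.log ρ := by
      calc Real.log (p ρ) ≤ Real.log (c₂ * ρ ^ s) := Real.log_le_log hp hb.2
        _ = Real.log c₂ + s * Real.log ρ := by
            rw [Real.log_mul (ne_of_gt hc₂) (ne_of_gt hrp), Real.log_rpow hρ0]
    calc Real.log (p ρ) / Real.log ρ
        ≤ (Real.log c₂ + s * Real.log ρ) / Real.log ρ := div_le_div_of_nonneg_right h1 hlρ.le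
      _ = s + Real.log c₂ / Real.log ρ := by field_simp; ring

end Aux

/-- The SNR exponent `s(α₁, α₂, α_sr)` of Lemma 1. -/
noncomputable def sExp (η α₁ α₂ αsr : ℝ) : ℝ :=
  if α₁ + α₂ ≤ 1 then η + 4 - 3 * α₁ - 2 * α₂ - αsr
  else η + 3 - 2 * α₁ - α₂ - αsr

set_option maxHeartbeats 1000000

/-- Cumulative-distribution form of Lemma 1: with `W = |h_sr|² ~ Exp(1)`,
`X = ‖h_s‖² ~ Gamma(2,1)`, `Y = ‖h_{r⊥s}‖² ~ Exp(1)`, `Z = ‖h_{r∥s}‖² ~ Exp(1)`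
mutually independent, the event
`{W ≤ ρ^{α_sr−η}, X ≤ ρ^{α₁−1}, Y + Z/(1+ρX) ≤ ρ^{α₂−1}}`
has high-SNR exponential order `ρ^{−s(α₁,α₂,α_sr)}`. -/
theorem joint_exponent_lemma1 (η : ℝ) (hη : 1 ≤ η) {Ω : Type*} [MeasureSpace Ω]
    [IsProbabilityMeasure (ℙ : Measure Ω)]
    (W X Y Z : Ω → ℝ) (hW : Measurable W) (hX : Measurable X)
    (hY : Measurable Y) (hZ : Measurable Z)
    (hindep : iIndepFun
      ![W, X, Y, Z] ℙ)
    (hlawW : Measure.map W ℙ = expMeasure 1)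
    (hlawX : Measure.map X ℙ = gammaMeasure 2 1)
    (hlawY : Measure.map Y ℙ = expMeasure 1)
    (hlawZ : Measure.map Z ℙ = expMeasure 1)
    (α₁ α₂ αsr : ℝ) (h₁0 : 0 ≤ α₁) (h₁1 : α₁ < 1) (h₂0 : 0 ≤ α₂) (h₂1 : α₂ < 1)
    (hsr0 : 0 ≤ αsr) (hsrη : αsr < η) :
    Tendsto (fun ρ : ℝ =>
        Real.log (ℙ {ω | W ω ≤ ρ ^ (αsr - η) ∧ X ω ≤ ρ ^ (α₁ - 1) ∧
          Y ω + Z ω / (1 + ρ * X ω) ≤ ρ ^ (α₂ - 1)}).toReal / Real.log ρ)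
      atTop (nhds (-(sExp η α₁ α₂ αsr))) := by
  haveI : IsProbabilityMeasure (gammaMeasure 2 1) := isProbabilityMeasure_gammaMeasure two_pos one_pos
  haveI : IsProbabilityMeasure (expMeasure 1) := isProbabilityMeasure_expMeasure one_pos
  set e₃ : ℝ := min 0 (α₁ + α₂ - 1) with he₃
  have hsum : (αsr - η) + (α₁ - 1) + (α₁ - 1) + (α₂ - 1) + e₃ = -(sExp η α₁ α₂ αsr) := by
    rcases le_or_gt (α₁ + α₂) 1 with h | h
    · rw [he₃, min_eq_right (by linarith : α₁ + α₂ - 1 ≤ 0), sExp, if_pos h]; ring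
    · rw [he₃, min_eq_left (by linarith : (0:ℝ) ≤ α₁ + α₂ - 1), sExp, if_neg (by linarith)]; ring
  have hXnull : ℙ (X ⁻¹' Iio 0) = 0 := by
    rw [← Measure.map_apply hX measurableSet_Iio, hlawX]; exact gammaIio0
  have hYnull : ℙ (Y ⁻¹' Iio 0) = 0 := by
    rw [← Measure.map_apply hY measurableSet_Iio, hlawY]; exact expIio0
  have hZnull : ℙ (Z ⁻¹' Iio 0) = 0 := by
    rw [← Measure.map_apply hZ measurableSet_Iio, hlawZ]; exact expIio0
  have hE2 : ∀ᶠ ρ : ℝ in atTop, (1 < α₁ + α₂ → 4 ≤ ρ ^ (α₁ + α₂ - 1)) := by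
    rcases le_or_gt (α₁ + α₂) 1 with h | h
    · filter_upwards with ρ hc; linarith
    · have := (tendsto_rpow_atTop (by linarith : 0 < α₁ + α₂ - 1)).eventually_ge_atTop 4
      filter_upwards [this] with ρ hρ _; exact hρ
  apply squeezeLog (by norm_num : (0:ℝ) < 1/512) (by norm_num : (0:ℝ) < 2)
  filter_upwards [eventually_ge_atTop (2:ℝ), hE2] with ρ hρ2 hρ4
  have hρ0 : (0:ℝ) < ρ := by linarith
  have hρ1 : (1:ℝ) ≤ ρ := by linarith
  set a : ℝ := ρ ^ (αsr - η) with ha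
  set b : ℝ := ρ ^ (α₁ - 1) with hb
  set c : ℝ := ρ ^ (α₂ - 1) with hc
  have ha0 : 0 < a := Real.rpow_pos_of_pos hρ0 _
  have hb0 : 0 < b := Real.rpow_pos_of_pos hρ0 _
  have hc0 : 0 < c := Real.rpow_pos_of_pos hρ0 _
  have ha1 : a ≤ 1 := Real.rpow_le_one_of_one_le_of_nonpos hρ1 (by linarith)
  have hb1 : b ≤ 1 := Real.rpow_le_one_of_one_le_of_nonpos hρ1 (by linarith)
  have hc1 : c ≤ 1 := Real.rpow_le_one_of_one_le_of_nonpos hρ1 (by linarith)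
  have he₃1 : ρ ^ e₃ ≤ 1 := Real.rpow_le_one_of_one_le_of_nonpos hρ1 (min_le_left _ _)
  have he₃p : 0 < ρ ^ e₃ := Real.rpow_pos_of_pos hρ0 _
  have hcb : c * ρ * b = ρ ^ (α₁ + α₂ - 1) := by
    rw [hc, hb, show (α₁ + α₂ - 1) = (α₂ - 1) + 1 + (α₁ - 1) by ring,
      Real.rpow_add hρ0, Real.rpow_add hρ0, Real.rpow_one]
  have hprod : a * b ^ 2 * c * ρ ^ e₃ = ρ ^ (-(sExp η α₁ α₂ αsr)) := by
    rw [← hsum, ha, hb, hc, pow_two, ← Real.rpow_add hρ0, ← Real.rpow_add hρ0,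
      ← Real.rpow_add hρ0, ← Real.rpow_add hρ0]
    congr 1; ring
  set E : Set Ω := {ω | W ω ≤ a ∧ X ω ≤ b ∧ Y ω + Z ω / (1 + ρ * X ω) ≤ c} with hE
  set N : Set Ω := X ⁻¹' Iio 0 ∪ Y ⁻¹' Iio 0 ∪ Z ⁻¹' Iio 0 with hN
  have hNnull : ℙ N = 0 := measure_union_null (measure_union_null hXnull hYnull) hZnull
  have mapW : ∀ S : Set ℝ, MeasurableSet S → ℙ (W ⁻¹' S) = expMeasure 1 S := fun S hS => by
    rw [← Measure.map_apply hW hS, hlawW]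
  have mapX : ∀ S : Set ℝ, MeasurableSet S → ℙ (X ⁻¹' S) = gammaMeasure 2 1 S := fun S hS => by
    rw [← Measure.map_apply hX hS, hlawX]
  have mapY : ∀ S : Set ℝ, MeasurableSet S → ℙ (Y ⁻¹' S) = expMeasure 1 S := fun S hS => by
    rw [← Measure.map_apply hY hS, hlawY]
  have mapZ : ∀ S : Set ℝ, MeasurableSet S → ℙ (Z ⁻¹' S) = expMeasure 1 S := fun S hS => by
    rw [← Measure.map_apply hZ hS, hlawZ]
  constructor
  · -- LOWER BOUND
    set u : ℝ := (c/2) * (1 + ρ * (b/2)) with hu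
    have hu0 : 0 ≤ u := by positivity
    have hsub : {ω | W ω ∈ Iic a ∧ X ω ∈ Icc (b/2) b ∧ Y ω ∈ Icc 0 (c/2) ∧ Z ω ∈ Icc 0 u}
        ⊆ E := by
      rintro ω ⟨h0, h1, h2, h3⟩
      simp only [Set.mem_Iic, Set.mem_Icc] at h0 h1 h2 h3
      refine ⟨h0, h1.2, ?_⟩
      have hden : (0:ℝ) < 1 + ρ * (b/2) := by positivity
      have hdenX : (0:ℝ) < 1 + ρ * X ω := by nlinarith [h1.1]
      have hZdiv : Z ω / (1 + ρ * X ω) ≤ c/2 := by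
        have e1 : Z ω / (1 + ρ * X ω) ≤ Z ω / (1 + ρ * (b/2)) := by
          exact div_le_div_of_nonneg_left h3.1 hden (by nlinarith [h1.1])
        have e2 : Z ω / (1 + ρ * (b/2)) ≤ u / (1 + ρ * (b/2)) :=
          div_le_div_of_nonneg_right h3.2 hden.le
        have e3 : u / (1 + ρ * (b/2)) = c/2 := by
          rw [hu]; field_simp
        linarith
      linarith [h2.2]
    have hkey : ℙ (W ⁻¹' Iic a) * ℙ (X ⁻¹' Icc (b/2) b) * ℙ (Y ⁻¹' Icc 0 (c/2))
        * ℙ (Z ⁻¹' Icc 0 u) ≤ ℙ E := by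
      rw [← prod4 W X Y Z hindep _ _ _ _ measurableSet_Iic measurableSet_Icc
        measurableSet_Icc measurableSet_Icc]
      exact measure_mono hsub
    have hreal := ENNReal.toReal_mono (measure_ne_top _ _) hkey
    rw [ENNReal.toReal_mul, ENNReal.toReal_mul, ENNReal.toReal_mul] at hreal
    have t0 : a/2 ≤ (ℙ (W ⁻¹' Iic a)).toReal := by
      rw [mapW _ measurableSet_Iic, expIic ha0.le]
      exact oneSubExpGeHalf ha0.le ha1
    have t1 : b^2/8 ≤ (ℙ (X ⁻¹' Icc (b/2) b)).toReal := by
      rw [mapX _ measurableSet_Icc]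
      have hval : ((gammaMeasure 2 1) (Ioc (b/2) b)).toReal
          = ∫ x in (b/2)..b, x * Real.exp (-x) := by
        rw [gammaIoc (by positivity) (by linarith), ENNReal.toReal_ofReal
          (le_trans (by positivity) (intLower hb0.le hb1))]
      calc b^2/8 ≤ ∫ x in (b/2)..b, x * Real.exp (-x) := intLower hb0.le hb1
        _ = ((gammaMeasure 2 1) (Ioc (b/2) b)).toReal := hval.symm
        _ ≤ ((gammaMeasure 2 1) (Icc (b/2) b)).toReal :=
            ENNReal.toReal_mono (measure_ne_top _ _) (measure_mono Set.Ioc_subset_Icc_self)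
    have t2 : c/4 ≤ (ℙ (Y ⁻¹' Icc 0 (c/2))).toReal := by
      rw [mapY _ measurableSet_Icc, expIccVal (by positivity), expIic (by positivity)]
      have := oneSubExpGeHalf (by positivity : (0:ℝ) ≤ c/2) (by linarith)
      linarith
    have t3 : ρ ^ e₃ / 8 ≤ (ℙ (Z ⁻¹' Icc 0 u)).toReal := by
      rw [mapZ _ measurableSet_Icc, expIccVal hu0, expIic hu0]
      have huv : ρ ^ (α₁ + α₂ - 1) / 4 ≤ u := by
        rw [hu, show (c/2) * (1 + ρ * (b/2)) = c/2 + (c * ρ * b)/4 by ring, hcb]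
        linarith
      rcases le_or_gt (α₁ + α₂) 1 with hcase | hcase
      · have he : e₃ = α₁ + α₂ - 1 := min_eq_right (by linarith)
        have hv1 : ρ ^ (α₁ + α₂ - 1) ≤ 1 :=
          Real.rpow_le_one_of_one_le_of_nonpos hρ1 (by linarith)
        have hvp : 0 < ρ ^ (α₁ + α₂ - 1) := Real.rpow_pos_of_pos hρ0 _
        have hmono : Real.exp (-u) ≤ Real.exp (-(ρ ^ (α₁ + α₂ - 1) / 4)) :=
          Real.exp_le_exp.mpr (by linarith)
        have := oneSubExpGeHalf (by positivity : (0:ℝ) ≤ ρ ^ (α₁ + α₂ - 1) / 4)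
          (by linarith)
        rw [he]
        linarith
      · have he : e₃ = 0 := min_eq_left (by linarith)
        have h4 : 4 ≤ ρ ^ (α₁ + α₂ - 1) := hρ4 hcase
        have hu1 : 1 ≤ u := by linarith
        have := oneSubExpGe1 hu1
        rw [he, Real.rpow_zero]
        linarith
    calc 1/512 * ρ ^ (-(sExp η α₁ α₂ αsr)) = (a/2) * (b^2/8) * (c/4) * (ρ ^ e₃ / 8) := by
          rw [← hprod]; ring
      _ ≤ (ℙ (W ⁻¹' Iic a)).toReal * (ℙ (X ⁻¹' Icc (b/2) b)).toReal
          * (ℙ (Y ⁻¹' Icc 0 (c/2))).toReal * (ℙ (Z ⁻¹' Icc 0 u)).toReal := by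
          apply mul_le_mul (mul_le_mul (mul_le_mul t0 t1 (by positivity)
            ENNReal.toReal_nonneg) t2 (by positivity)
            (by positivity)) t3 (by positivity) (by positivity)
      _ ≤ (ℙ E).toReal := hreal
  · -- UPPER BOUND
    set M : ℝ := c * (1 + ρ * b) with hM
    have hM0 : 0 ≤ M := by positivity
    have hsub : E ⊆ {ω | W ω ∈ Iic a ∧ X ω ∈ Iic b ∧ Y ω ∈ Iic c ∧ Z ω ∈ Iic M} ∪ N := by
      rintro ω ⟨h0, h1, h2⟩
      rcases lt_or_ge (X ω) 0 with hx | hx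
      · exact Or.inr (Or.inl (Or.inl hx))
      rcases lt_or_ge (Y ω) 0 with hy | hy
      · exact Or.inr (Or.inl (Or.inr hy))
      rcases lt_or_ge (Z ω) 0 with hz | hz
      · exact Or.inr (Or.inr hz)
      left
      have hdenX : (0:ℝ) < 1 + ρ * X ω := by nlinarith
      have hzx : 0 ≤ Z ω / (1 + ρ * X ω) := by positivity
      refine ⟨h0, h1, by simp only [Set.mem_Iic]; linarith, ?_⟩
      simp only [Set.mem_Iic]
      have hzc : Z ω ≤ c * (1 + ρ * X ω) := by
        rw [← div_le_iff₀ hdenX] at *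
        linarith
      have : c * (1 + ρ * X ω) ≤ M := by
        rw [hM]
        apply mul_le_mul_of_nonneg_left _ hc0.le
        nlinarith
      linarith
    have hkey : ℙ E ≤ ℙ (W ⁻¹' Iic a) * ℙ (X ⁻¹' Iic b) * ℙ (Y ⁻¹' Iic c)
        * ℙ (Z ⁻¹' Iic M) := by
      rw [← prod4 W X Y Z hindep _ _ _ _ measurableSet_Iic measurableSet_Iic
        measurableSet_Iic measurableSet_Iic]
      calc ℙ E ≤ ℙ ({ω | W ω ∈ Iic a ∧ X ω ∈ Iic b ∧ Y ω ∈ Iic c ∧ Z ω ∈ Iic M} ∪ N) :=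
            measure_mono hsub
        _ ≤ ℙ {ω | W ω ∈ Iic a ∧ X ω ∈ Iic b ∧ Y ω ∈ Iic c ∧ Z ω ∈ Iic M} + ℙ N :=
            measure_union_le _ _
        _ = ℙ {ω | W ω ∈ Iic a ∧ X ω ∈ Iic b ∧ Y ω ∈ Iic c ∧ Z ω ∈ Iic M} := by
            rw [hNnull, add_zero]
    have hreal := ENNReal.toReal_mono (by
      refine ENNReal.mul_ne_top (ENNReal.mul_ne_top (ENNReal.mul_ne_top ?_ ?_) ?_) ?_ <;>
        exact measure_ne_top _ _) hkey
    rw [ENNReal.toReal_mul, ENNReal.toReal_mul, ENNReal.toReal_mul] at hreal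
    have t0 : (ℙ (W ⁻¹' Iic a)).toReal ≤ a := by
      rw [mapW _ measurableSet_Iic, expIic ha0.le]
      exact oneSubExpLe a
    have t1 : (ℙ (X ⁻¹' Iic b)).toReal ≤ b^2 := by
      rw [mapX _ measurableSet_Iic, gammaIicVal hb0.le, ENNReal.toReal_ofReal
        (intervalIntegral.integral_nonneg hb0.le fun x hx => mul_nonneg hx.1 (Real.exp_pos _).le)]
      exact intUpper hb0.le
    have t2 : (ℙ (Y ⁻¹' Iic c)).toReal ≤ c := by
      rw [mapY _ measurableSet_Iic, expIic hc0.le]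
      exact oneSubExpLe c
    have t3 : (ℙ (Z ⁻¹' Iic M)).toReal ≤ 2 * ρ ^ e₃ := by
      rw [mapZ _ measurableSet_Iic, expIic hM0]
      rcases le_or_gt (α₁ + α₂) 1 with hcase | hcase
      · have he : e₃ = α₁ + α₂ - 1 := min_eq_right (by linarith)
        have hMle : M ≤ 2 * ρ ^ (α₁ + α₂ - 1) := by
          have hcle : c ≤ ρ ^ (α₁ + α₂ - 1) := by
            rw [hc]
            exact Real.rpow_le_rpow_of_exponent_le hρ1 (by linarith)
          calc M = c + c * ρ * b := by rw [hM]; ring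
            _ = c + ρ ^ (α₁ + α₂ - 1) := by rw [hcb]
            _ ≤ 2 * ρ ^ (α₁ + α₂ - 1) := by linarith
        rw [he]
        linarith [oneSubExpLe M]
      · have he : e₃ = 0 := min_eq_left (by linarith)
        rw [he, Real.rpow_zero]
        have := Real.exp_pos (-M)
        linarith
    calc (ℙ E).toReal ≤ (ℙ (W ⁻¹' Iic a)).toReal * (ℙ (X ⁻¹' Iic b)).toReal
          * (ℙ (Y ⁻¹' Iic c)).toReal * (ℙ (Z ⁻¹' Iic M)).toReal := hreal
      _ ≤ a * b^2 * c * (2 * ρ ^ e₃) := by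
          apply mul_le_mul (mul_le_mul (mul_le_mul t0 t1 ENNReal.toReal_nonneg ha0.le)
            t2 ENNReal.toReal_nonneg (by positivity)) t3 ENNReal.toReal_nonneg (by positivity)
      _ = 2 * ρ ^ (-(sExp η α₁ α₂ αsr)) := by rw [← hprod]; ring
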